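/- Let p ∈ (0,1), let h(x) := x log x for x ∈ (0,1] with h(0) := 0, and for each n ∈ ℕ let X_{n,p} be a binomial B(n,p) distributed random variable. Then ‖h(X_{n,p}/n) − E[h(X_{n,p}/n)]‖_3 = O(n^{−1/2}) as n → ∞, where ‖Y‖_3 = (E[|Y|³])^{1/3}. -/

import Mathlib

open Filter Asymptotics Real

/-- Expectation of `a` under the binomial distribution `B(n, p)`. -/
noncomputable def binomExp (p : ℝ) (n : ℕ) (a : ℕ → ℝ) : ℝ :=
  ∑ k ∈ Finset.range (n + 1), (n.choose k : ℝ) * p ^ k * (1 - p) ^ (n - k) * a k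

open Finset


lemma castD2 (k : ℕ) : ((k.descFactorial 2 : ℕ) : ℝ) = k * (k - 1) := by
  rcases k with _ | m
  · simp
  · simp [Nat.descFactorial]; push_cast; ring

lemma castD3 (k : ℕ) : ((k.descFactorial 3 : ℕ) : ℝ) = k * (k - 1) * (k - 2) := by
  rcases k with _ | _ | m
  · simp
  · simp [Nat.descFactorial]
  · simp [Nat.descFactorial]; push_cast; ring

lemma castD4 (k : ℕ) : ((k.descFactorial 4 : ℕ) : ℝ) = k * (k - 1) * (k - 2) * (k - 3) := by
  rcases k with _ | _ | _ | m
  · simp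
  · simp [Nat.descFactorial]
  · simp [Nat.descFactorial]
  · simp [Nat.descFactorial]; push_cast; ring

lemma factMoment (p q : ℝ) (hpq : p + q = 1) (n j : ℕ) :
    ∑ k ∈ range (n + 1), (n.choose k : ℝ) * p ^ k * q ^ (n - k) * (k.descFactorial j : ℝ)
      = (n.descFactorial j : ℝ) * p ^ j := by
  rcases le_or_gt j n with hj | hj
  · have hsub : Ico j (n + 1) ⊆ range (n + 1) := by
      rw [range_eq_Ico]; exact Ico_subset_Ico (Nat.zero_le _) le_rfl
    rw [← Finset.sum_subset hsub (by
      intro k hk hnk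
      have hk' : k < j := by
        simp only [mem_Ico, mem_range] at hk hnk; omega
      rw [Nat.descFactorial_eq_zero_iff_lt.2 hk']; simp)]
    rw [Finset.sum_Ico_eq_sum_range]
    have hr : n + 1 - j = (n - j) + 1 := by omega
    rw [hr]
    have key : ∀ i ∈ range ((n - j) + 1),
        (n.choose (j + i) : ℝ) * p ^ (j + i) * q ^ (n - (j + i)) * ((j + i).descFactorial j : ℝ)
        = (n.descFactorial j : ℝ) * p ^ j * (p ^ i * q ^ ((n - j) - i) * ((n - j).choose i : ℝ)) := by
      intro i hi
      have hi' : i ≤ n - j := by simpa [Nat.lt_succ_iff] using hi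
      have hji : j + i ≤ n := by omega
      have hnat : n.choose (j + i) * (j + i).descFactorial j
          = n.descFactorial j * (n - j).choose i := by
        rw [Nat.descFactorial_eq_factorial_mul_choose, Nat.descFactorial_eq_factorial_mul_choose]
        have := Nat.choose_mul (n := n) (Nat.le_add_right j i)
        rw [Nat.add_sub_cancel_left] at this
        calc n.choose (j + i) * (Nat.factorial j * (j + i).choose j)
            = (n.choose (j + i) * (j + i).choose j) * Nat.factorial j := by ring
          _ = (n.choose j * (n - j).choose i) * Nat.factorial j := by rw [this]
          _ = Nat.factorial j * n.choose j * (n - j).choose i := by ring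
      have hq : n - (j + i) = (n - j) - i := by omega
      have hcast : (n.choose (j + i) : ℝ) * ((j + i).descFactorial j : ℝ)
          = (n.descFactorial j : ℝ) * ((n - j).choose i : ℝ) := by
        exact_mod_cast congrArg (Nat.cast : ℕ → ℝ) hnat
      rw [hq, pow_add]
      linear_combination (p ^ j * p ^ i * q ^ ((n - j) - i)) * hcast
    rw [Finset.sum_congr rfl key, ← Finset.mul_sum]
    rw [← add_pow p q (n - j), hpq, one_pow, mul_one]
  · have : ∀ k ∈ range (n + 1),
        (n.choose k : ℝ) * p ^ k * q ^ (n - k) * (k.descFactorial j : ℝ) = 0 := by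
      intro k hk
      rw [mem_range, Nat.lt_succ_iff] at hk
      rw [Nat.descFactorial_eq_zero_iff_lt.2 (lt_of_le_of_lt hk hj)]; simp
    have h0 : ((n.descFactorial j : ℕ) : ℝ) = 0 := by
      rw [Nat.descFactorial_eq_zero_iff_lt.2 hj]; simp
    rw [h0, zero_mul]
    exact Finset.sum_eq_zero this

lemma sum_w (p q : ℝ) (hpq : p + q = 1) (n : ℕ) :
    ∑ k ∈ range (n + 1), (n.choose k : ℝ) * p ^ k * q ^ (n - k) = 1 := by
  have h := factMoment p q hpq n 0
  simpa using h

lemma central2 (p q : ℝ) (hpq : p + q = 1) (n : ℕ) :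
    ∑ k ∈ range (n + 1), (n.choose k : ℝ) * p ^ k * q ^ (n - k) * ((k : ℝ) - n * p) ^ 2
      = n * p * q := by
  have key : ∀ k ∈ range (n + 1),
      (n.choose k : ℝ) * p ^ k * q ^ (n - k) * ((k : ℝ) - n * p) ^ 2
      = ((n.choose k : ℝ) * p ^ k * q ^ (n - k) * (k.descFactorial 2 : ℝ))
        + (1 - 2 * (n * p)) * ((n.choose k : ℝ) * p ^ k * q ^ (n - k) * (k.descFactorial 1 : ℝ))
        + (n * p) ^ 2 * ((n.choose k : ℝ) * p ^ k * q ^ (n - k)) := by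
    intro k _
    rw [castD2, Nat.descFactorial_one]
    ring
  rw [Finset.sum_congr rfl key, Finset.sum_add_distrib, Finset.sum_add_distrib,
    ← Finset.mul_sum, ← Finset.mul_sum, factMoment p q hpq n 2, factMoment p q hpq n 1,
    sum_w p q hpq, castD2, Nat.descFactorial_one]
  have hq : q = 1 - p := by linarith
  subst hq
  push_cast
  ring

lemma central4 (p q : ℝ) (hpq : p + q = 1) (n : ℕ) :
    ∑ k ∈ range (n + 1), (n.choose k : ℝ) * p ^ k * q ^ (n - k) * ((k : ℝ) - n * p) ^ 4
      = n * p * q + 3 * n ^ 2 * p ^ 2 * q ^ 2 - 6 * n * p ^ 2 * q ^ 2 := by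
  have key : ∀ k ∈ range (n + 1),
      (n.choose k : ℝ) * p ^ k * q ^ (n - k) * ((k : ℝ) - n * p) ^ 4
      = ((n.choose k : ℝ) * p ^ k * q ^ (n - k) * (k.descFactorial 4 : ℝ))
        + (6 - 4 * (n * p)) * ((n.choose k : ℝ) * p ^ k * q ^ (n - k) * (k.descFactorial 3 : ℝ))
        + (7 - 12 * (n * p) + 6 * (n * p) ^ 2)
            * ((n.choose k : ℝ) * p ^ k * q ^ (n - k) * (k.descFactorial 2 : ℝ))
        + (1 - 4 * (n * p) + 6 * (n * p) ^ 2 - 4 * (n * p) ^ 3)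
            * ((n.choose k : ℝ) * p ^ k * q ^ (n - k) * (k.descFactorial 1 : ℝ))
        + (n * p) ^ 4 * ((n.choose k : ℝ) * p ^ k * q ^ (n - k)) := by
    intro k _
    rw [castD4, castD3, castD2, Nat.descFactorial_one]
    ring
  rw [Finset.sum_congr rfl key, Finset.sum_add_distrib, Finset.sum_add_distrib,
    Finset.sum_add_distrib, Finset.sum_add_distrib,
    ← Finset.mul_sum, ← Finset.mul_sum, ← Finset.mul_sum, ← Finset.mul_sum,
    factMoment p q hpq n 4, factMoment p q hpq n 3, factMoment p q hpq n 2,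
    factMoment p q hpq n 1, sum_w p q hpq, castD4, castD3, castD2, Nat.descFactorial_one]
  have hq : q = 1 - p := by linarith
  subst hq
  push_cast
  ring

lemma habs_le_one {x : ℝ} (h0 : 0 ≤ x) (h1 : x ≤ 1) : |x * Real.log x| ≤ 1 := by
  rcases eq_or_lt_of_le h0 with hx | hx
  · rw [← hx]; simp
  · have hlog : Real.log x ≤ 0 := Real.log_nonpos (le_of_lt hx) h1
    have hxl : x * Real.log x ≤ 0 := mul_nonpos_of_nonneg_of_nonpos h0 hlog
    rw [abs_of_nonpos hxl]
    have h2 : Real.log x⁻¹ ≤ x⁻¹ - 1 := Real.log_le_sub_one_of_pos (by positivity)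
    rw [Real.log_inv] at h2
    have h3 : -(x * Real.log x) = x * -Real.log x := by ring
    rw [h3]
    have h4 : x * -Real.log x ≤ x * (x⁻¹ - 1) :=
      mul_le_mul_of_nonneg_left h2 h0
    have h5 : x * (x⁻¹ - 1) = 1 - x := by field_simp
    nlinarith

lemma lip_mul_log {c : ℝ} (hc : 0 < c) {x y : ℝ}
    (hx : x ∈ Set.Icc c 1) (hy : y ∈ Set.Icc c 1) :
    |x * Real.log x - y * Real.log y| ≤ (1 - Real.log c) * |x - y| := by
  have bound : ∀ t ∈ Set.Icc c 1, ‖Real.log t + 1‖ ≤ 1 - Real.log c := by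
    intro t ht
    have ht0 : 0 < t := lt_of_lt_of_le hc ht.1
    have h1 : Real.log t ≤ 0 := Real.log_nonpos ht0.le ht.2
    have h2 : Real.log c ≤ Real.log t := Real.log_le_log hc ht.1
    have h3 : Real.log c ≤ 0 := h2.trans h1
    rw [Real.norm_eq_abs, abs_le]
    constructor <;> linarith
  have key := (convex_Icc c 1).norm_image_sub_le_of_norm_hasDerivWithin_le
    (f := fun t => t * Real.log t) (f' := fun t => Real.log t + 1)
    (fun t ht => (Real.hasDerivAt_mul_log (ne_of_gt (lt_of_lt_of_le hc ht.1))).hasDerivWithinAt)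
    bound hy hx
  simpa [Real.norm_eq_abs] using key

set_option maxHeartbeats 1000000 in
lemma main_bound (p : ℝ) (hp0 : 0 < p) (hp1 : p < 1) (n : ℕ) (hn : 1 ≤ n) :
    binomExp p n (fun k => |((k : ℝ) / n) * Real.log ((k : ℝ) / n)
        - binomExp p n (fun j => ((j : ℝ) / n) * Real.log ((j : ℝ) / n))| ^ 3)
      ≤ 8 * ((1 - Real.log (p / 2)) ^ 3 + 128 / p ^ 4) * ((n : ℝ) ^ (-(1 : ℝ) / 2)) ^ 3 := by
  have hν1 : (1 : ℝ) ≤ (n : ℝ) := by exact_mod_cast hn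
  have hν0 : (0 : ℝ) < (n : ℝ) := by linarith
  set L : ℝ := 1 - Real.log (p / 2) with hLdef
  have hlogc : Real.log (p / 2) ≤ 0 := Real.log_nonpos (by positivity) (by linarith)
  have hL1 : 1 ≤ L := by rw [hLdef]; linarith
  set w : ℕ → ℝ := fun k => (n.choose k : ℝ) * p ^ k * (1 - p) ^ (n - k) with hwdef
  set g : ℕ → ℝ := fun k => ((k : ℝ) / n) * Real.log ((k : ℝ) / n) with hgdef
  set z : ℕ → ℝ := fun k => (k : ℝ) - (n : ℝ) * p with hzdef
  set a : ℕ → ℝ := fun k => |g k - p * Real.log p| with hadef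
  have hq1 : p + (1 - p) = 1 := by ring
  have hw0 : ∀ k, 0 ≤ w k := by
    intro k
    have h1p : (0 : ℝ) ≤ 1 - p := by linarith
    exact mul_nonneg (mul_nonneg (by positivity) (by positivity)) (pow_nonneg h1p _)
  have hsw : ∑ k ∈ range (n + 1), w k = 1 := sum_w p (1 - p) hq1 n
  have hM2 : ∑ k ∈ range (n + 1), w k * z k ^ 2 = (n : ℝ) * p * (1 - p) := central2 p (1 - p) hq1 n
  have hM4 : ∑ k ∈ range (n + 1), w k * z k ^ 4
      = (n : ℝ) * p * (1 - p) + 3 * (n : ℝ) ^ 2 * p ^ 2 * (1 - p) ^ 2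
        - 6 * (n : ℝ) * p ^ 2 * (1 - p) ^ 2 := central4 p (1 - p) hq1 n
  have hpq4 : p * (1 - p) ≤ 1 / 4 := by nlinarith [sq_nonneg (1 - 2 * p)]
  have h16 : p ^ 2 * (1 - p) ^ 2 ≤ 1 / 16 := by
    nlinarith [hpq4, mul_nonneg hp0.le (by linarith : (0:ℝ) ≤ 1 - p)]
  have hM2le : ∑ k ∈ range (n + 1), w k * z k ^ 2 ≤ (n : ℝ) := by
    rw [hM2]; nlinarith [hν1, hpq4]
  have hM4le : ∑ k ∈ range (n + 1), w k * z k ^ 4 ≤ (n : ℝ) ^ 2 := by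
    rw [hM4]
    have hz1 : 0 ≤ p ^ 2 * (1 - p) ^ 2 := by positivity
    nlinarith [hν1, hpq4, h16, mul_le_mul_of_nonneg_left hpq4 hν0.le,
      mul_le_mul_of_nonneg_left h16 (sq_nonneg (n : ℝ)),
      mul_nonneg hν0.le hz1]
  have hM4nn : 0 ≤ ∑ k ∈ range (n + 1), w k * z k ^ 4 :=
    Finset.sum_nonneg fun k _ => mul_nonneg (hw0 k) (by positivity)
  have hM2nn : 0 ≤ ∑ k ∈ range (n + 1), w k * z k ^ 2 :=
    Finset.sum_nonneg fun k _ => mul_nonneg (hw0 k) (by positivity)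
  set s : ℝ := Real.sqrt (n : ℝ) with hsdef
  have hs1 : 1 ≤ s := by
    rw [hsdef, show (1:ℝ) = Real.sqrt 1 by simp]
    exact Real.sqrt_le_sqrt hν1
  have hs0 : 0 < s := by linarith
  have hssq : s ^ 2 = (n : ℝ) := Real.sq_sqrt hν0.le
  -- third absolute moment bound
  have hT3 : ∑ k ∈ range (n + 1), w k * |z k| ^ 3 ≤ s ^ 3 := by
    have hcs := Finset.sum_mul_sq_le_sq_mul_sq (range (n + 1))
      (fun k => Real.sqrt (w k) * |z k|) (fun k => Real.sqrt (w k) * z k ^ 2)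
    have e1 : ∀ k ∈ range (n + 1),
        (Real.sqrt (w k) * |z k|) * (Real.sqrt (w k) * z k ^ 2) = w k * |z k| ^ 3 := by
      intro k _
      have : Real.sqrt (w k) * Real.sqrt (w k) = w k := Real.mul_self_sqrt (hw0 k)
      have hz3 : |z k| * z k ^ 2 = |z k| ^ 3 := by
        rw [← sq_abs]; ring
      calc (Real.sqrt (w k) * |z k|) * (Real.sqrt (w k) * z k ^ 2)
          = (Real.sqrt (w k) * Real.sqrt (w k)) * (|z k| * z k ^ 2) := by ring
        _ = w k * |z k| ^ 3 := by rw [this, hz3]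
    have e2 : ∀ k ∈ range (n + 1),
        (Real.sqrt (w k) * |z k|) ^ 2 = w k * z k ^ 2 := by
      intro k _
      rw [mul_pow, Real.sq_sqrt (hw0 k), sq_abs]
    have e3 : ∀ k ∈ range (n + 1),
        (Real.sqrt (w k) * z k ^ 2) ^ 2 = w k * z k ^ 4 := by
      intro k _
      rw [mul_pow, Real.sq_sqrt (hw0 k)]; ring
    rw [Finset.sum_congr rfl e1, Finset.sum_congr rfl e2, Finset.sum_congr rfl e3] at hcs
    have hTnn : 0 ≤ ∑ k ∈ range (n + 1), w k * |z k| ^ 3 :=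
      Finset.sum_nonneg fun k _ => mul_nonneg (hw0 k) (by positivity)
    have hsq : (∑ k ∈ range (n + 1), w k * |z k| ^ 3) ^ 2 ≤ (s ^ 3) ^ 2 := by
      have h1 : (∑ k ∈ range (n + 1), w k * z k ^ 2) * ∑ k ∈ range (n + 1), w k * z k ^ 4
          ≤ (n : ℝ) * (n : ℝ) ^ 2 := mul_le_mul hM2le hM4le hM4nn hν0.le
      have h2 : (s ^ 3) ^ 2 = (n : ℝ) * (n : ℝ) ^ 2 := by
        rw [show (s ^ 3) ^ 2 = (s ^ 2) ^ 3 by ring, hssq]; ring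
      linarith
    exact (pow_le_pow_iff_left₀ hTnn (by positivity) two_ne_zero).mp hsq
  -- pointwise bound
  have hpoint : ∀ k ∈ range (n + 1), w k * a k ^ 3
      ≤ (L ^ 3 / (n : ℝ) ^ 3) * (w k * |z k| ^ 3)
        + (128 / ((n : ℝ) ^ 4 * p ^ 4)) * (w k * z k ^ 4) := by
    intro k hk
    have hkn : (k : ℝ) ≤ (n : ℝ) := by
      rw [mem_range, Nat.lt_succ_iff] at hk; exact_mod_cast hk
    have hk0 : (0 : ℝ) ≤ (k : ℝ) := Nat.cast_nonneg k
    have hkν1 : (k : ℝ) / n ≤ 1 := by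
      rw [div_le_one hν0]; exact hkn
    have hkν0 : 0 ≤ (k : ℝ) / n := by positivity
    have habsz : |(k : ℝ) / n - p| = |z k| / n := by
      rw [hzdef]
      rw [show (k : ℝ) / n - p = ((k : ℝ) - (n : ℝ) * p) / n by field_simp]
      rw [abs_div, abs_of_pos hν0]
    have ht1nn : 0 ≤ (L ^ 3 / (n : ℝ) ^ 3) * (w k * |z k| ^ 3) := by
      have : (0:ℝ) ≤ L ^ 3 := by positivity
      exact mul_nonneg (by positivity) (mul_nonneg (hw0 k) (by positivity))
    have ht2nn : 0 ≤ (128 / ((n : ℝ) ^ 4 * p ^ 4)) * (w k * z k ^ 4) :=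
      mul_nonneg (by positivity) (mul_nonneg (hw0 k) (by positivity))
    rcases le_or_gt (p / 2) ((k : ℝ) / n) with hgood | hbad
    · -- Lipschitz regime
      have ha1 : a k ≤ L * |(k : ℝ) / n - p| := by
        rw [hadef, hgdef, hLdef]
        exact lip_mul_log (by positivity) ⟨hgood, hkν1⟩ ⟨by linarith, hp1.le⟩
      have ha3 : a k ^ 3 ≤ (L * |(k : ℝ) / n - p|) ^ 3 :=
        pow_le_pow_left₀ (abs_nonneg _) ha1 3
      have heq : (L * |(k : ℝ) / n - p|) ^ 3 = (L ^ 3 / (n : ℝ) ^ 3) * |z k| ^ 3 := by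
        rw [habsz]; field_simp
      have : w k * a k ^ 3 ≤ (L ^ 3 / (n : ℝ) ^ 3) * (w k * |z k| ^ 3) := by
        calc w k * a k ^ 3 ≤ w k * ((L ^ 3 / (n : ℝ) ^ 3) * |z k| ^ 3) := by
              rw [← heq]; exact mul_le_mul_of_nonneg_left ha3 (hw0 k)
          _ = (L ^ 3 / (n : ℝ) ^ 3) * (w k * |z k| ^ 3) := by ring
      linarith
    · -- bad regime
      have ha2 : a k ≤ 2 := by
        rw [hadef, hgdef]
        have h1 := habs_le_one hkν0 hkν1
        have h2 := habs_le_one hp0.le hp1.le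
        calc |(k : ℝ) / n * Real.log ((k : ℝ) / n) - p * Real.log p|
            ≤ |(k : ℝ) / n * Real.log ((k : ℝ) / n)| + |p * Real.log p| := abs_sub _ _
          _ ≤ 2 := by linarith
      have ha3 : a k ^ 3 ≤ 8 := by
        calc a k ^ 3 ≤ 2 ^ 3 := pow_le_pow_left₀ (abs_nonneg _) ha2 3
          _ = 8 := by norm_num
      have hzlb : (n : ℝ) * p / 2 ≤ |z k| := by
        have hkp : (k : ℝ) < (n : ℝ) * p / 2 := by
          rw [div_lt_iff₀ hν0] at hbad
          linarith [hbad]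
        have hzval : z k = (k : ℝ) - (n : ℝ) * p := rfl
        have hzneg : z k ≤ -((n : ℝ) * p / 2) := by
          rw [hzval]; linarith [hkp]
        have hz0 : z k < 0 := by
          rw [hzval]; nlinarith [hkp, mul_pos hν0 hp0]
        have : |z k| = -(z k) := abs_of_neg hz0
        rw [this]; linarith
      have hz4 : ((n : ℝ) * p / 2) ^ 4 ≤ z k ^ 4 := by
        calc ((n : ℝ) * p / 2) ^ 4 ≤ |z k| ^ 4 :=
              pow_le_pow_left₀ (by positivity) hzlb 4
          _ = z k ^ 4 := by rw [← abs_pow, abs_of_nonneg (by positivity)]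
      have hcoef : (8 : ℝ) ≤ (128 / ((n : ℝ) ^ 4 * p ^ 4)) * z k ^ 4 := by
        have h1 : (128 / ((n : ℝ) ^ 4 * p ^ 4)) * ((n : ℝ) * p / 2) ^ 4 = 8 := by
          field_simp; ring
        calc (8 : ℝ) = (128 / ((n : ℝ) ^ 4 * p ^ 4)) * ((n : ℝ) * p / 2) ^ 4 := h1.symm
          _ ≤ (128 / ((n : ℝ) ^ 4 * p ^ 4)) * z k ^ 4 :=
              mul_le_mul_of_nonneg_left hz4 (by positivity)
      have : w k * a k ^ 3 ≤ (128 / ((n : ℝ) ^ 4 * p ^ 4)) * (w k * z k ^ 4) := by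
        calc w k * a k ^ 3 ≤ w k * 8 := mul_le_mul_of_nonneg_left ha3 (hw0 k)
          _ ≤ w k * ((128 / ((n : ℝ) ^ 4 * p ^ 4)) * z k ^ 4) :=
              mul_le_mul_of_nonneg_left hcoef (hw0 k)
          _ = (128 / ((n : ℝ) ^ 4 * p ^ 4)) * (w k * z k ^ 4) := by ring
      linarith
  -- sum of a^3
  have hA : ∑ k ∈ range (n + 1), w k * a k ^ 3 ≤ (L ^ 3 + 128 / p ^ 4) / s ^ 3 := by
    have h1 : ∑ k ∈ range (n + 1), w k * a k ^ 3
        ≤ (L ^ 3 / (n : ℝ) ^ 3) * ∑ k ∈ range (n + 1), (w k * |z k| ^ 3)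
          + (128 / ((n : ℝ) ^ 4 * p ^ 4)) * ∑ k ∈ range (n + 1), (w k * z k ^ 4) := by
      rw [Finset.mul_sum, Finset.mul_sum, ← Finset.sum_add_distrib]
      exact Finset.sum_le_sum hpoint
    have h2 : (L ^ 3 / (n : ℝ) ^ 3) * ∑ k ∈ range (n + 1), (w k * |z k| ^ 3)
        ≤ (L ^ 3 / (n : ℝ) ^ 3) * s ^ 3 :=
      mul_le_mul_of_nonneg_left hT3 (by positivity)
    have h3 : (128 / ((n : ℝ) ^ 4 * p ^ 4)) * ∑ k ∈ range (n + 1), (w k * z k ^ 4)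
        ≤ (128 / ((n : ℝ) ^ 4 * p ^ 4)) * (n : ℝ) ^ 2 :=
      mul_le_mul_of_nonneg_left hM4le (by positivity)
    have h4 : (L ^ 3 / (n : ℝ) ^ 3) * s ^ 3 = L ^ 3 / s ^ 3 := by
      rw [show ((n:ℝ)) ^ 3 = (s ^ 2) ^ 3 by rw [hssq]]
      field_simp
    have h5 : (128 / ((n : ℝ) ^ 4 * p ^ 4)) * (n : ℝ) ^ 2 ≤ (128 / p ^ 4) / s ^ 3 := by
      have hs34 : s ^ 3 ≤ s ^ 4 := pow_le_pow_right₀ (by linarith) (by norm_num)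
      calc (128 / ((n : ℝ) ^ 4 * p ^ 4)) * (n : ℝ) ^ 2 = 128 / (p ^ 4 * s ^ 4) := by
            rw [show ((n:ℝ)) = s ^ 2 from hssq.symm]
            field_simp
        _ ≤ 128 / (p ^ 4 * s ^ 3) := by
            apply div_le_div_of_nonneg_left (by norm_num) (by positivity)
            exact mul_le_mul_of_nonneg_left hs34 (by positivity)
        _ = (128 / p ^ 4) / s ^ 3 := by rw [div_div]
    have : (L ^ 3 + 128 / p ^ 4) / s ^ 3 = L ^ 3 / s ^ 3 + (128 / p ^ 4) / s ^ 3 := by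
      ring
    linarith
  -- mean deviation
  set μ : ℝ := binomExp p n g with hμdef
  set b : ℝ := |μ - p * Real.log p| with hbdef
  have hμsum : μ = ∑ k ∈ range (n + 1), w k * g k := by
    rw [hμdef, binomExp]
  have ha0 : ∀ k, 0 ≤ a k := by
    intro k; rw [hadef]; exact abs_nonneg _
  have hb0 : 0 ≤ b := by rw [hbdef]; exact abs_nonneg _
  have hble : b ≤ ∑ k ∈ range (n + 1), w k * a k := by
    have hsplit : ∑ k ∈ range (n + 1), w k * g k - p * Real.log p
        = ∑ k ∈ range (n + 1), w k * (g k - p * Real.log p) := by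
      simp only [mul_sub]
      rw [Finset.sum_sub_distrib, ← Finset.sum_mul, hsw, one_mul]
    rw [hbdef, hμsum, hsplit]
    calc |∑ k ∈ range (n + 1), w k * (g k - p * Real.log p)|
        ≤ ∑ k ∈ range (n + 1), |w k * (g k - p * Real.log p)| :=
          Finset.abs_sum_le_sum_abs _ _
      _ = ∑ k ∈ range (n + 1), w k * a k := by
          refine Finset.sum_congr rfl fun k _ => ?_
          rw [abs_mul, abs_of_nonneg (hw0 k), hadef]
  have hb3 : b ^ 3 ≤ ∑ k ∈ range (n + 1), w k * a k ^ 3 := by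
    have hj := Real.pow_arith_mean_le_arith_mean_pow (range (n + 1)) w a
      (fun i _ => hw0 i) hsw (fun i _ => ha0 i) 3
    calc b ^ 3 ≤ (∑ k ∈ range (n + 1), w k * a k) ^ 3 :=
          pow_le_pow_left₀ hb0 hble 3
      _ ≤ ∑ k ∈ range (n + 1), w k * a k ^ 3 := hj
  -- the main expectation
  have hEdef : binomExp p n (fun k => |(k : ℝ) / n * Real.log ((k : ℝ) / n) - μ| ^ 3)
      = ∑ k ∈ range (n + 1), w k * |g k - μ| ^ 3 := by
    rw [binomExp]
  have hE : ∑ k ∈ range (n + 1), w k * |g k - μ| ^ 3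
      ≤ 8 * ∑ k ∈ range (n + 1), w k * a k ^ 3 := by
    have hpt : ∀ k ∈ range (n + 1),
        w k * |g k - μ| ^ 3 ≤ 4 * (w k * a k ^ 3) + (4 * b ^ 3) * w k := by
      intro k _
      have htri : |g k - μ| ≤ a k + b := by
        calc |g k - μ| ≤ |g k - p * Real.log p| + |p * Real.log p - μ| := abs_sub_le (g k) (p * Real.log p) μ
          _ = a k + b := by rw [abs_sub_comm (p * Real.log p) μ]
      have h1 : |g k - μ| ^ 3 ≤ (a k + b) ^ 3 := pow_le_pow_left₀ (abs_nonneg _) htri 3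
      have h2 : (a k + b) ^ 3 ≤ 4 * a k ^ 3 + 4 * b ^ 3 := by
        nlinarith [mul_nonneg (add_nonneg (ha0 k) hb0) (sq_nonneg (a k - b))]
      have h3 : w k * |g k - μ| ^ 3 ≤ w k * (4 * a k ^ 3 + 4 * b ^ 3) :=
        mul_le_mul_of_nonneg_left (h1.trans h2) (hw0 k)
      nlinarith [h3]
    calc ∑ k ∈ range (n + 1), w k * |g k - μ| ^ 3
        ≤ ∑ k ∈ range (n + 1), (4 * (w k * a k ^ 3) + (4 * b ^ 3) * w k) :=
          Finset.sum_le_sum hpt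
      _ = 4 * ∑ k ∈ range (n + 1), w k * a k ^ 3 + 4 * b ^ 3 := by
          rw [Finset.sum_add_distrib, ← Finset.mul_sum, ← Finset.mul_sum, hsw, mul_one]
      _ ≤ 8 * ∑ k ∈ range (n + 1), w k * a k ^ 3 := by linarith [hb3]
  -- put everything together
  have hrw : ((n : ℝ) ^ (-(1 : ℝ) / 2) : ℝ) = s⁻¹ := by
    rw [show (-(1 : ℝ) / 2) = -(1 / 2 : ℝ) by norm_num, Real.rpow_neg hν0.le,
      ← Real.sqrt_eq_rpow, hsdef]
  rw [hEdef]
  have hgoal : (8 : ℝ) * (L ^ 3 + 128 / p ^ 4) * ((n : ℝ) ^ (-(1 : ℝ) / 2)) ^ 3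
      = 8 * ((L ^ 3 + 128 / p ^ 4) / s ^ 3) := by
    rw [hrw, inv_pow, mul_assoc, ← div_eq_mul_inv]
  calc ∑ k ∈ range (n + 1), w k * |g k - μ| ^ 3
      ≤ 8 * ∑ k ∈ range (n + 1), w k * a k ^ 3 := hE
    _ ≤ 8 * ((L ^ 3 + 128 / p ^ 4) / s ^ 3) := by linarith [hA]
    _ = 8 * (L ^ 3 + 128 / p ^ 4) * ((n : ℝ) ^ (-(1 : ℝ) / 2)) ^ 3 := hgoal.symm

lemma binomExp_nonneg {p : ℝ} (hp0 : 0 ≤ p) (hp1 : p ≤ 1) (n : ℕ) {a : ℕ → ℝ}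
    (ha : ∀ k, 0 ≤ a k) : 0 ≤ binomExp p n a := by
  rw [binomExp]
  refine Finset.sum_nonneg fun k _ => ?_
  have h1p : (0 : ℝ) ≤ 1 - p := by linarith
  exact mul_nonneg (mul_nonneg (mul_nonneg (by positivity) (by positivity))
    (pow_nonneg h1p _)) (ha k)

theorem stmt16 (p : ℝ) (hp : p ∈ Set.Ioo (0 : ℝ) 1) (h : ℝ → ℝ)
    (hh : ∀ x : ℝ, h x = x * Real.log x) :
    (fun n : ℕ =>
        (binomExp p n
            (fun k => |h ((k : ℝ) / n) - binomExp p n (fun j => h ((j : ℝ) / n))| ^ 3))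
          ^ ((1 : ℝ) / 3))
      =O[atTop] (fun n : ℕ => (n : ℝ) ^ (-(1 : ℝ) / 2)) := by
  obtain ⟨hp0, hp1⟩ := hp
  have hlogc : Real.log (p / 2) ≤ 0 := Real.log_nonpos (by positivity) (by linarith)
  have hC0 : (0 : ℝ) ≤ 8 * ((1 - Real.log (p / 2)) ^ 3 + 128 / p ^ 4) := by
    have h1 : (0 : ℝ) ≤ (1 - Real.log (p / 2)) ^ 3 := pow_nonneg (by linarith) 3
    have h2 : (0 : ℝ) ≤ 128 / p ^ 4 := by positivity
    linarith
  rw [Asymptotics.isBigO_iff]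
  refine ⟨(8 * ((1 - Real.log (p / 2)) ^ 3 + 128 / p ^ 4)) ^ ((1 : ℝ) / 3), ?_⟩
  filter_upwards [Filter.eventually_ge_atTop 1] with n hn
  have hν1 : (1 : ℝ) ≤ (n : ℝ) := by exact_mod_cast hn
  have hν0 : (0 : ℝ) < (n : ℝ) := by linarith
  have hr0 : (0 : ℝ) ≤ (n : ℝ) ^ (-(1 : ℝ) / 2) := Real.rpow_nonneg hν0.le _
  simp only [hh]
  have hE0 : 0 ≤ binomExp p n
      (fun k => |(k : ℝ) / n * Real.log ((k : ℝ) / n)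
        - binomExp p n (fun j => (j : ℝ) / n * Real.log ((j : ℝ) / n))| ^ 3) :=
    binomExp_nonneg hp0.le hp1.le n fun k => by positivity
  have hmb := main_bound p hp0 hp1 n hn
  rw [Real.norm_eq_abs, Real.norm_eq_abs, abs_of_nonneg (Real.rpow_nonneg hE0 _),
    abs_of_nonneg hr0]
  have step1 := Real.rpow_le_rpow hE0 hmb (by norm_num : (0:ℝ) ≤ 1/3)
  have step2 : (8 * ((1 - Real.log (p / 2)) ^ 3 + 128 / p ^ 4)
        * ((n : ℝ) ^ (-(1 : ℝ) / 2)) ^ 3) ^ ((1 : ℝ) / 3)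
      = (8 * ((1 - Real.log (p / 2)) ^ 3 + 128 / p ^ 4)) ^ ((1 : ℝ) / 3)
        * ((n : ℝ) ^ (-(1 : ℝ) / 2)) := by
    rw [Real.mul_rpow hC0 (by positivity)]
    congr 1
    rw [← Real.rpow_natCast ((n : ℝ) ^ (-(1 : ℝ) / 2)) 3, ← Real.rpow_mul hr0]
    norm_num
  exact step1.trans_eq step2
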